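/- arXiv:1212.5789 — 4 statements merged into one kernel-verified Lean document; each statement's English description precedes it below -/
import Mathlib

section
/- Let F be a bijection of GF(2^m) with F(0) = 0. Then F is an APN permutation if and only if for every nonzero a ∈ GF(2^m), the set {x + F⁻¹(a + F(x)) : x ∈ GF(2^m)} has exactly 2^(m−1) elements. -/
/-- A bijection `F` of `GF(2^m)` with `F 0 = 0` is an APN permutation iff
for every nonzero `a`, the set `{x + F⁻¹(a + F x) : x}` has exactly
`2^(m-1)` elements. -/
theorem apn_iff_vF_max (m : ℕ) (hm : 1 ≤ m)
    (F : GaloisField 2 m ≃ GaloisField 2 m) (hF0 : F 0 = 0) :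
    (∀ a b : GaloisField 2 m, b ≠ 0 →
      {x : GaloisField 2 m | F x + F (x + b) = a}.ncard ≤ 2) ↔
    (∀ a : GaloisField 2 m, a ≠ 0 →
      (Set.range (fun x : GaloisField 2 m => x + F.symm (a + F x))).ncard =
        2 ^ (m - 1)) := by
  classical
  haveI : Fact (Nat.Prime 2) := ⟨Nat.prime_two⟩
  haveI : Fintype (GaloisField 2 m) := Fintype.ofFinite _
  have hcard : Fintype.card (GaloisField 2 m) = 2 ^ m := by
    rw [← Nat.card_eq_fintype_card]; exact GaloisField.card 2 m (by omega)
  have hchar : ∀ x : GaloisField 2 m, x + x = 0 := fun x => CharTwo.add_self_eq_zero x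
  have hcancel : ∀ u v w : GaloisField 2 m, u + v = w ↔ v = u + w := by
    intro u v w
    constructor
    · rintro rfl; rw [← add_assoc, hchar, zero_add]
    · rintro rfl; rw [← add_assoc, hchar, zero_add]
  have key : ∀ a b x : GaloisField 2 m, x + F.symm (a + F x) = b ↔ F x + F (x + b) = a := by
    intro a b x
    rw [hcancel, Equiv.symm_apply_eq, add_comm a, hcancel, eq_comm]
  -- fibers as finsets
  have hfibset : ∀ a b : GaloisField 2 m, {x : GaloisField 2 m | F x + F (x + b) = a}
      = ↑(Finset.univ.filter (fun x : GaloisField 2 m => x + F.symm (a + F x) = b)) := by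
    intro a b; ext x
    simp [key, Set.mem_setOf_eq]
  have hpow : 2 ^ m = 2 * 2 ^ (m - 1) := by
    obtain ⟨k, rfl⟩ := Nat.exists_eq_add_of_le hm
    simp [pow_add]
  have hsum : ∀ a : GaloisField 2 m,
      ∑ b ∈ (Set.range (fun x : GaloisField 2 m => x + F.symm (a + F x))).toFinset,
        (Finset.univ.filter (fun x : GaloisField 2 m => x + F.symm (a + F x) = b)).card = 2 ^ m := by
    intro a
    rw [← hcard]
    exact (Finset.card_eq_sum_card_fiberwise (fun x _ => by
      simp [Set.mem_toFinset])).symm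
  have hbne : ∀ a : GaloisField 2 m, a ≠ 0 →
      ∀ b ∈ Set.range (fun x : GaloisField 2 m => x + F.symm (a + F x)), b ≠ 0 := by
    rintro a ha b ⟨x, hx⟩ rfl
    have := (key a 0 x).mp hx
    rw [add_zero, hchar] at this
    exact ha this.symm
  have hge2 : ∀ a : GaloisField 2 m, a ≠ 0 →
      ∀ b ∈ Set.range (fun x : GaloisField 2 m => x + F.symm (a + F x)),
      2 ≤ (Finset.univ.filter (fun x : GaloisField 2 m => x + F.symm (a + F x) = b)).card := by
    intro a ha b hb
    obtain ⟨x, hx⟩ := hb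
    have hbne0 : b ≠ 0 := hbne a ha b ⟨x, hx⟩
    have hxk : F x + F (x + b) = a := (key a b x).mp hx
    have hx2 : F (x + b) + F ((x + b) + b) = a := by
      rw [add_assoc, hchar, add_zero, add_comm]; exact hxk
    refine Finset.one_lt_card.mpr ⟨x, ?_, x + b, ?_, ?_⟩
    · simpa [Finset.mem_filter] using hx
    · simp only [Finset.mem_filter, Finset.mem_univ, true_and]
      exact (key a b (x + b)).mpr hx2
    · intro h
      exact hbne0 (by simpa using (left_eq_add.mp h))
  constructor
  · -- APN → range card
    intro hAPN a ha
    have hcard2 : ∀ b ∈ (Set.range (fun x : GaloisField 2 m => x + F.symm (a + F x))).toFinset,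
        (Finset.univ.filter (fun x : GaloisField 2 m => x + F.symm (a + F x) = b)).card = 2 := by
      intro b hb
      rw [Set.mem_toFinset] at hb
      refine le_antisymm ?_ (hge2 a ha b hb)
      have := hAPN a b (hbne a ha b hb)
      rwa [hfibset, Set.ncard_coe_finset] at this
    have h2t : 2 * (Set.range (fun x : GaloisField 2 m => x + F.symm (a + F x))).toFinset.card
        = 2 ^ m := by
      rw [← hsum a, Finset.sum_congr rfl hcard2, Finset.sum_const, smul_eq_mul,
        mul_comm]
    rw [Set.ncard_eq_toFinset_card']
    have : 2 * (Set.range (fun x : GaloisField 2 m => x + F.symm (a + F x))).toFinset.card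
        = 2 * 2 ^ (m - 1) := by rw [h2t, hpow]
    omega
  · -- range card → APN
    intro hR a b hb
    by_cases ha : a = 0
    · subst ha
      have hempty : {x : GaloisField 2 m | F x + F (x + b) = 0} = ∅ := by
        ext x
        simp only [Set.mem_setOf_eq, Set.mem_empty_iff_false, iff_false]
        intro h
        rw [hcancel, add_zero] at h
        exact hb (by simpa using left_eq_add.mp (F.injective h.symm))
      rw [hempty]; simp
    · rw [hfibset, Set.ncard_coe_finset]
      by_contra hgt
      push_neg at hgt
      have hne : (Finset.univ.filter (fun x : GaloisField 2 m => x + F.symm (a + F x) = b)).Nonempty := by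
        rw [← Finset.card_pos]; omega
      obtain ⟨x, hx⟩ := hne
      rw [Finset.mem_filter] at hx
      have hbr : b ∈ Set.range (fun x : GaloisField 2 m => x + F.symm (a + F x)) := ⟨x, hx.2⟩
      have htc : (Set.range (fun x : GaloisField 2 m => x + F.symm (a + F x))).toFinset.card
          = 2 ^ (m - 1) := by
        rw [← Set.ncard_eq_toFinset_card']; exact hR a ha
      have hlt : ∑ b' ∈ (Set.range (fun x : GaloisField 2 m => x + F.symm (a + F x))).toFinset, 2
          < ∑ b' ∈ (Set.range (fun x : GaloisField 2 m => x + F.symm (a + F x))).toFinset,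
            (Finset.univ.filter (fun x : GaloisField 2 m => x + F.symm (a + F x) = b')).card := by
        refine Finset.sum_lt_sum (fun i hi => hge2 a ha i (Set.mem_toFinset.mp hi))
          ⟨b, Set.mem_toFinset.mpr hbr, hgt⟩
      rw [hsum a, Finset.sum_const, smul_eq_mul, mul_comm, htc, ← hpow] at hlt
      exact lt_irrefl _ hlt
end

section
/- Let m be a positive integer and suppose m has a divisor m' with 1 < m' < m. Then for any t with gcd(t, 2^m − 1) = 1, the monomial permutation F(x) = x^t of GF(2^m) is not a self-embedding permutation in a closed surface for STS(H^n): there is no starting point a₁ ∈ GF(2^m) \ {0,1} such that the sequence a_{i+1} = F(F⁻¹(1) + F⁻¹(1 + a_i)) for i = 1, …, 2^(m−1) − 2 consists of 2^(m−1) − 1 pairwise distinct elements that together with 1 and the elements 1 + a_i exhaust GF(2^m) \ {0}. -/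
/-- If `m` has a divisor `m'` with `1 < m' < m`, then no monomial power
permutation `F(x) = x^t` (with `gcd(t, 2^m − 1) = 1`, inverse exponent `t'`)
is a self-embedding permutation in a closed surface for `STS(H^n)`: there is
no starting point `a 1 ∈ GF(2^m) \ {0,1}` such that the rotation sequence
`a (i+1) = F(F⁻¹(1) + F⁻¹(1 + a i))` consists of `2^(m-1) − 1` pairwise
distinct elements which together with `1` and the elements `1 + a i` exhaust
the nonzero elements. -/
theorem no_closed_surface_self_embedding_of_not_prime (m m' t t' : ℕ)
    (hdvd : m' ∣ m) (h1 : 1 < m') (h2 : m' < m)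
    (hg : Nat.gcd t (2 ^ m - 1) = 1) (htt' : t * t' ≡ 1 [MOD 2 ^ m - 1]) :
    ¬ ∃ a : ℕ → GaloisField 2 m,
      a 1 ≠ 0 ∧ a 1 ≠ 1 ∧
      (∀ i : ℕ, 1 ≤ i → i ≤ 2 ^ (m - 1) - 2 →
        a (i + 1) = ((1 : GaloisField 2 m) ^ t' + (1 + a i) ^ t') ^ t) ∧
      (∀ i j : ℕ, 1 ≤ i → i ≤ 2 ^ (m - 1) - 1 → 1 ≤ j → j ≤ 2 ^ (m - 1) - 1 →
        a i = a j → i = j) ∧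
      ({(1 : GaloisField 2 m)} ∪
          (⋃ i ∈ Set.Icc 1 (2 ^ (m - 1) - 1), {a i, 1 + a i}) =
        {x : GaloisField 2 m | x ≠ 0}) := by
  rintro ⟨a, ha0, ha1, hrec, hdist, hcover⟩
  -- basic numerics
  have hm4 : 4 ≤ m := by
    obtain ⟨c, rfl⟩ := hdvd
    rcases Nat.lt_or_ge c 2 with hc | hc
    · interval_cases c <;> omega
    · nlinarith
  have hm0 : m ≠ 0 := by omega
  have hpm : 2 ^ m' < 2 ^ m := Nat.pow_lt_pow_right (by norm_num) h2
  have hpm4 : 4 ≤ 2 ^ m' := by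
    calc (4:ℕ) = 2 ^ 2 := by norm_num
    _ ≤ 2 ^ m' := Nat.pow_le_pow_right (by norm_num) h1
  have hN2 : 16 ≤ 2 ^ m := by
    calc (16:ℕ) = 2 ^ 4 := by norm_num
    _ ≤ 2 ^ m := Nat.pow_le_pow_right (by norm_num) hm4
  -- the pow identity x ^ (t * t') = x
  have hpowcard : ∀ x : GaloisField 2 m, x ≠ 0 → x ^ (2 ^ m - 1) = 1 := by
    intro x hx
    letI : Fintype (GaloisField 2 m) := Fintype.ofFinite _
    have hc : Fintype.card (GaloisField 2 m) = 2 ^ m := by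
      rw [← Nat.card_eq_fintype_card]; exact GaloisField.card 2 m hm0
    rw [← hc]; exact FiniteField.pow_card_sub_one_eq_one x hx
  have hmod : t * t' % (2 ^ m - 1) = 1 := by
    have h1m : 1 % (2 ^ m - 1) = 1 := Nat.mod_eq_of_lt (by omega)
    have := htt'
    unfold Nat.ModEq at this
    omega
  have hpowid : ∀ x : GaloisField 2 m, x ^ (t * t') = x := by
    intro x
    have hk := Nat.div_add_mod (t * t') (2 ^ m - 1)
    rw [hmod] at hk
    rcases eq_or_ne x 0 with rfl | hx
    · rw [zero_pow]; omega
    · calc x ^ (t * t')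
          = x ^ ((2 ^ m - 1) * (t * t' / (2 ^ m - 1)) + 1) := by rw [hk]
        _ = (x ^ (2 ^ m - 1)) ^ (t * t' / (2 ^ m - 1)) * x := by
            rw [pow_add, pow_mul, pow_one]
        _ = x := by rw [hpowcard x hx, one_pow, one_mul]
  -- injectivity of the power maps
  have hinjt : Function.Injective (fun x : GaloisField 2 m => x ^ t) := by
    intro x y h
    simp only at h
    have : (x ^ t) ^ t' = (y ^ t) ^ t' := by rw [h]
    rwa [← pow_mul, ← pow_mul, hpowid, hpowid] at this
  have hinjt' : Function.Injective (fun x : GaloisField 2 m => x ^ t') := by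
    intro x y h
    simp only at h
    have : (x ^ t') ^ t = (y ^ t') ^ t := by rw [h]
    rwa [← pow_mul, ← pow_mul, mul_comm t' t, hpowid, hpowid] at this
  -- the iteration map and its injectivity
  have hinjf : Function.Injective
      (fun x : GaloisField 2 m => (1 + (1 + x) ^ t') ^ t) := by
    intro x y h
    simp only at h
    have h2' := hinjt h
    have h3 : (1 + x) ^ t' = (1 + y) ^ t' := by
      have := add_left_cancel h2'
      exact this
    have h4 := hinjt' h3
    exact add_left_cancel h4
  -- the subfield predicate
  set q : ℕ := 2 ^ m' with hq
  have hfrob : ∀ x y : GaloisField 2 m, (x + y) ^ q = x ^ q + y ^ q := by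
    intro x y; exact add_pow_char_pow x y 2 m'
  have hK1 : (1 : GaloisField 2 m) ^ q = 1 := one_pow q
  have hKadd1 : ∀ x : GaloisField 2 m, x ^ q = x → (1 + x) ^ q = 1 + x := by
    intro x hx; rw [hfrob, hK1, hx]
  -- f commutes with frobenius, hence preserves K in both directions
  have hcomm : ∀ x : GaloisField 2 m,
      ((1 + (1 + x) ^ t') ^ t) ^ q = (1 + (1 + x ^ q) ^ t') ^ t := by
    intro x
    calc ((1 + (1 + x) ^ t') ^ t) ^ q
        = ((1 + (1 + x) ^ t') ^ q) ^ t := by rw [← pow_mul, mul_comm, pow_mul]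
      _ = (1 + (((1 + x) ^ t') ^ q)) ^ t := by rw [hfrob, hK1]
      _ = (1 + ((1 + x) ^ q) ^ t') ^ t := by rw [← pow_mul, mul_comm t' q, pow_mul]
      _ = (1 + (1 + x ^ q) ^ t') ^ t := by rw [hfrob, hK1]
  have hfiff : ∀ x : GaloisField 2 m,
      ((1 + (1 + x) ^ t') ^ t) ^ q = (1 + (1 + x) ^ t') ^ t ↔ x ^ q = x := by
    intro x
    rw [hcomm]
    constructor
    · intro h; exact hinjf h
    · intro h; rw [h]
  -- generator of the unit group
  obtain ⟨g, hgen⟩ := IsCyclic.exists_generator (α := (GaloisField 2 m)ˣ)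
  have hord : orderOf g = 2 ^ m - 1 := by
    rw [orderOf_eq_card_of_forall_mem_zpowers hgen, Nat.card_units,
      GaloisField.card 2 m hm0]
  have hdvd' : (2 ^ m' - 1) ∣ (2 ^ m - 1) := by
    obtain ⟨c, hc⟩ := hdvd
    have := Nat.sub_dvd_pow_sub_pow (2 ^ m') 1 c
    rwa [one_pow, ← pow_mul, ← hc] at this
  set d : ℕ := (2 ^ m - 1) / (2 ^ m' - 1) with hdd
  have hd : (2 ^ m' - 1) * d = 2 ^ m - 1 := Nat.mul_div_cancel' hdvd'
  have hdpos : 0 < d := by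
    rcases Nat.eq_zero_or_pos d with h | h
    · rw [h, mul_zero] at hd; omega
    · exact h
  have hdlt : d < 2 ^ m - 1 := by
    have h3d : 3 * d ≤ (2 ^ m' - 1) * d := Nat.mul_le_mul_right d (by omega)
    rw [hd] at h3d
    omega
  have hgne : (g : GaloisField 2 m) ≠ 0 := Units.ne_zero g
  have hgpow : ∀ k : ℕ, ((g : GaloisField 2 m)) ^ k = ((g ^ k : (GaloisField 2 m)ˣ) : GaloisField 2 m) := by
    intro k; push_cast; ring
  -- b := g ^ d is in K, b ≠ 0, b ≠ 1
  have hbne0 : (g : GaloisField 2 m) ^ d ≠ 0 := pow_ne_zero d hgne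
  have hbne1 : (g : GaloisField 2 m) ^ d ≠ 1 := by
    intro h
    have hu : g ^ d = 1 := by
      apply Units.ext
      rw [← hgpow]; exact h
    have := orderOf_dvd_of_pow_eq_one hu
    rw [hord] at this
    have := Nat.le_of_dvd hdpos this
    omega
  have hbK : ((g : GaloisField 2 m) ^ d) ^ q = (g : GaloisField 2 m) ^ d := by
    have hq1 : d * q = (2 ^ m - 1) + d := by
      have : d * q = d * (2 ^ m' - 1) + d := by
        have h4 : 1 ≤ 2 ^ m' := by omega
        calc d * q = d * ((2 ^ m' - 1) + 1) := by rw [hq]; congr 1; omega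
          _ = d * (2 ^ m' - 1) + d := by ring
      rw [this, mul_comm d _, hd]
    rw [← pow_mul, hq1, pow_add, hpowcard _ hgne, one_mul]
  have hgnotK : ¬ ((g : GaloisField 2 m) ^ q = (g : GaloisField 2 m)) := by
    intro h
    have hq1 : q = (2 ^ m' - 1) + 1 := by omega
    have h5 : (g : GaloisField 2 m) ^ (2 ^ m' - 1) * g = 1 * g := by
      rw [one_mul, ← pow_succ, ← hq1, h]
    have h6 : (g : GaloisField 2 m) ^ (2 ^ m' - 1) = 1 := mul_right_cancel₀ hgne h5
    have hu : g ^ (2 ^ m' - 1) = 1 := by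
      apply Units.ext; rw [← hgpow]; exact h6
    have := orderOf_dvd_of_pow_eq_one hu
    rw [hord] at this
    have := Nat.le_of_dvd (by omega) this
    omega
  -- abstract the exponent bound so omega can deal with it
  set E : ℕ := 2 ^ (m - 1) with hE
  -- cleaned-up recurrence
  have hrec' : ∀ i : ℕ, 1 ≤ i → i ≤ E - 2 →
      a (i + 1) = (1 + (1 + a i) ^ t') ^ t := by
    intro i hi1 hi2
    rw [hrec i hi1 hi2, one_pow]
  -- membership in the cover forces membership in K for some aᵢ
  have hcov : ∀ x : GaloisField 2 m, x ≠ 0 → x = 1 ∨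
      ∃ i, (1 ≤ i ∧ i ≤ E - 1) ∧ (x = a i ∨ x = 1 + a i) := by
    intro x hx
    have : x ∈ ({(1 : GaloisField 2 m)} ∪
        (⋃ i ∈ Set.Icc 1 (E - 1), {a i, 1 + a i})) := by
      rw [hcover]; exact hx
    rcases this with h | h
    · left; exact h
    · right
      simp only [Set.mem_iUnion, Set.mem_Icc, Set.mem_insert_iff,
        Set.mem_singleton_iff] at h
      obtain ⟨i, hi, hmem⟩ := h
      exact ⟨i, hi, hmem⟩
  -- from b get some aᵢ in K
  obtain h | ⟨i₀, ⟨hi₀1, hi₀2⟩, hb⟩ := hcov _ hbne0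
  · exact hbne1 h
  have hai₀K : (a i₀) ^ q = a i₀ := by
    rcases hb with h | h
    · rw [← h]; exact hbK
    · have : a i₀ = 1 + (g : GaloisField 2 m) ^ d := by
        rw [h]
        have h2' : (1 : GaloisField 2 m) + 1 = 0 := by
          have : (2 : GaloisField 2 m) = 0 := by
            exact_mod_cast CharP.cast_eq_zero (GaloisField 2 m) 2
          calc (1 : GaloisField 2 m) + 1 = 2 := by ring
            _ = 0 := this
        rw [← add_assoc, h2', zero_add]
      rw [this]
      exact hKadd1 _ hbK
  -- backward propagation along the recurrence
  have hback : ∀ k j : ℕ, 1 ≤ j → j + k ≤ E - 1 →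
      (a (j + k)) ^ q = a (j + k) → (a j) ^ q = a j := by
    intro k
    induction k with
    | zero => intro j _ _ h; simpa using h
    | succ k ih =>
      intro j hj hjk hK
      have h1' : (a (j + 1)) ^ q = a (j + 1) := by
        apply ih (j + 1) (by omega) (by omega)
        rw [show j + 1 + k = j + (k + 1) by omega]
        exact hK
      rw [hrec' j hj (by omega)] at h1'
      exact (hfiff (a j)).1 h1'
  have ha1K : (a 1) ^ q = a 1 := by
    have := hback (i₀ - 1) 1 (le_refl 1) (by omega)
    rw [show 1 + (i₀ - 1) = i₀ by omega] at this
    exact this hai₀K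
  -- forward propagation
  have hfwd : ∀ k : ℕ, 1 + k ≤ E - 1 → (a (1 + k)) ^ q = a (1 + k) := by
    intro k
    induction k with
    | zero => intro _; simpa using ha1K
    | succ k ih =>
      intro hk
      have h1' := ih (by omega)
      rw [show 1 + (k + 1) = (1 + k) + 1 by omega,
        hrec' (1 + k) (by omega) (by omega)]
      exact (hfiff (a (1 + k))).2 h1'
  have hallK : ∀ j : ℕ, 1 ≤ j → j ≤ E - 1 → (a j) ^ q = a j := by
    intro j hj1 hj2
    have := hfwd (j - 1) (by omega)
    rwa [show 1 + (j - 1) = j by omega] at this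
  -- final contradiction: g itself must be covered, but everything covering is in K
  obtain h | ⟨i, ⟨hi1, hi2⟩, hcase⟩ := hcov _ hgne
  · apply hgnotK; rw [h]; exact hK1
  rcases hcase with h | h
  · apply hgnotK; rw [h]; exact hallK i hi1 hi2
  · apply hgnotK; rw [h]; exact hKadd1 _ (hallK i hi1 hi2)
end

section
/- On GF(2^m), let F(x) = x⁻¹ (with F(0) = 0) and define g(x) = F(F⁻¹(1) + F⁻¹(1 + x)) for x ∈ GF(2^m) \ {0, 1}. Then g(x) = 1 + x⁻¹, and g∘g∘g is the identity on GF(2^m) \ {0, 1}. -/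
section
variable {K : Type*} [Field K] [CharP K 2]

lemma melasG_key (x : K) (hx0 : x ≠ 0) (hx1 : x ≠ 1) :
    ((1:K)⁻¹ + (1 + x)⁻¹)⁻¹ = 1 + x⁻¹ := by
  have h1x : (1:K) + x ≠ 0 := by
    intro h
    apply hx1
    have := CharTwo.add_self_eq_zero (1:K)
    linear_combination h - this
  have hnum : (1:K) + (1 + x)⁻¹ = x * (1 + x)⁻¹ := by
    field_simp
    linear_combination CharTwo.add_self_eq_zero (1:K)
  rw [inv_one, hnum, mul_inv, inv_inv]
  field_simp
  ring

lemma melasG_key_ne_zero (x : K) (hx1 : x ≠ 1) : (1:K) + x⁻¹ ≠ 0 := by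
  intro h
  apply hx1
  have hx : x⁻¹ = 1 := by linear_combination h - CharTwo.add_self_eq_zero (1:K)

  have : x⁻¹⁻¹ = (1:K)⁻¹ := by rw [hx]
  simpa using this

lemma melasG_key_ne_one (x : K) (hx0 : x ≠ 0) : (1:K) + x⁻¹ ≠ 1 := by
  intro h
  have : x⁻¹ = 0 := by linear_combination h
  exact hx0 (by simpa using congrArg (·⁻¹) this)

end

/-- The rotation step at the point `1` for the inversion permutation
`F(x) = x⁻¹` (with `0⁻¹ = 0`), namely `g(x) = F(F⁻¹(1) + F⁻¹(1 + x))`. -/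
noncomputable def melasG (m : ℕ) (y : GaloisField 2 m) : GaloisField 2 m :=
  ((1 : GaloisField 2 m)⁻¹ + (1 + y)⁻¹)⁻¹

/-- For `x ∉ {0,1}` we have `g(x) = 1 + x⁻¹`, `g` maps `GF(2^m) \ {0,1}` to
itself, and `g ∘ g ∘ g` is the identity there. -/
theorem melasG_formula_and_order_three (m : ℕ) (x : GaloisField 2 m)
    (hx0 : x ≠ 0) (hx1 : x ≠ 1) :
    melasG m x = 1 + x⁻¹ ∧ melasG m x ≠ 0 ∧ melasG m x ≠ 1 ∧
      melasG m (melasG m (melasG m x)) = x := by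
  have h2 : CharP (GaloisField 2 m) 2 := inferInstance
  have h1 := melasG_key x hx0 hx1
  have g1ne0 : (1:GaloisField 2 m) + x⁻¹ ≠ 0 := melasG_key_ne_zero x hx1
  have g1ne1 : (1:GaloisField 2 m) + x⁻¹ ≠ 1 := melasG_key_ne_one x hx0
  have e1 : melasG m x = 1 + x⁻¹ := h1
  have e2 : melasG m (melasG m x) = 1 + (1 + x⁻¹)⁻¹ := by
    rw [e1, show melasG m (1 + x⁻¹) = _ from melasG_key _ g1ne0 g1ne1]
  have g2ne0 : (1:GaloisField 2 m) + (1 + x⁻¹)⁻¹ ≠ 0 := melasG_key_ne_zero _ g1ne1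
  have g2ne1 : (1:GaloisField 2 m) + (1 + x⁻¹)⁻¹ ≠ 1 := melasG_key_ne_one _ g1ne0
  have e3 : melasG m (melasG m (melasG m x)) = 1 + (1 + (1 + x⁻¹)⁻¹)⁻¹ := by
    rw [e2, show melasG m (1 + (1 + x⁻¹)⁻¹) = _ from melasG_key _ g2ne0 g2ne1]
  refine ⟨e1, e1 ▸ g1ne0, e1 ▸ g1ne1, ?_⟩
  rw [e3]
  have h1x : (1:GaloisField 2 m) + x ≠ 0 := by
    intro h
    exact hx1 (by linear_combination h - CharTwo.add_self_eq_zero (1:GaloisField 2 m))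
  have hA : (1:GaloisField 2 m) + x⁻¹ = (1 + x) * x⁻¹ := by
    field_simp
    ring
  have hA' : ((1:GaloisField 2 m) + x⁻¹)⁻¹ = x * (1 + x)⁻¹ := by
    rw [hA, mul_inv, inv_inv, mul_comm]
  have hB : (1:GaloisField 2 m) + x * (1 + x)⁻¹ = (1 + x)⁻¹ := by
    field_simp
    linear_combination CharTwo.add_self_eq_zero x
  rw [hA', hB, inv_inv]
  linear_combination CharTwo.add_self_eq_zero (1:GaloisField 2 m)
end

section
/- Let F be an APN permutation of GF(2^m) with F(0) = 0 and let a ∈ GF(2^m) \ {0}. Define g(x) = F(F⁻¹(a) + F⁻¹(a + x)) for x ∈ GF(2^m) \ {0, a}. Then g has no fixed point: g(x) ≠ x for all x ∈ GF(2^m) \ {0, a}. -/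
/-- For an APN permutation `F` of `GF(2^m)` with `F 0 = 0` and a nonzero
point `a`, the rotation successor map `g(x) = F(F⁻¹(a) + F⁻¹(a + x))` has no
fixed point on `GF(2^m) \ {0, a}`. -/
theorem apn_rotation_no_fixed_point (m : ℕ)
    (F : GaloisField 2 m ≃ GaloisField 2 m) (hF0 : F 0 = 0)
    (hAPN : ∀ c b : GaloisField 2 m, b ≠ 0 →
      {x : GaloisField 2 m | F x + F (x + b) = c}.ncard ≤ 2)
    (a : GaloisField 2 m) (ha : a ≠ 0) :
    ∀ x : GaloisField 2 m, x ≠ 0 → x ≠ a →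
      F (F.symm a + F.symm (a + x)) ≠ x := by
  intro x hx0 hxa hfix
  set u := F.symm a with hu
  set v := F.symm (a + x) with hv
  have htwo : ∀ y : GaloisField 2 m, y + y = 0 := by
    intro y
    have := CharTwo.add_self_eq_zero (R := GaloisField 2 m) y
    exact this
  have hFu : F u = a := F.apply_symm_apply a
  have hFv : F v = a + x := F.apply_symm_apply (a + x)
  have hune : u ≠ v := by
    intro h
    apply hx0
    have h2 : a + 0 = a + x := by rw [add_zero, ← hFv, ← hFu, h]
    exact (add_left_cancel h2).symm
  have hu0 : u ≠ 0 := by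
    intro h; apply ha; rw [← hFu, h, hF0]
  have hv0 : v ≠ 0 := by
    intro h
    apply hxa
    have : a + x = 0 := by rw [← hFv, h, hF0]
    calc x = a + (a + x) := by rw [← add_assoc, htwo, zero_add]
    _ = a := by rw [this, add_zero]
  have hb0 : u + v ≠ 0 := by
    intro h
    apply hune
    calc u = u + (v + v) := by rw [htwo, add_zero]
    _ = (u + v) + v := by ring
    _ = v := by rw [h, zero_add]
  set S := {y : GaloisField 2 m | F y + F (y + (u + v)) = F (u + v)} with hS
  have h0S : (0 : GaloisField 2 m) ∈ S := by
    simp only [hS, Set.mem_setOf_eq, zero_add, hF0]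
  have huS : u ∈ S := by
    simp only [hS, Set.mem_setOf_eq]
    have : u + (u + v) = v := by rw [← add_assoc, htwo, zero_add]
    rw [this, hFu, hFv, hfix, ← add_assoc, htwo, zero_add]
  have hvS : v ∈ S := by
    simp only [hS, Set.mem_setOf_eq]
    have : v + (u + v) = u := by
      calc v + (u + v) = u + (v + v) := by ring
      _ = u := by rw [htwo, add_zero]
    rw [this, hFu, hFv, hfix]
    calc a + x + a = x + (a + a) := by ring
    _ = x := by rw [htwo, add_zero]
  have hsub : ({0, u, v} : Set (GaloisField 2 m)) ⊆ S := by
    intro y hy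
    rcases hy with rfl | rfl | rfl
    exacts [h0S, huS, hvS]
  have hcard : ({0, u, v} : Set (GaloisField 2 m)).ncard = 3 := by
    rw [Set.ncard_insert_of_notMem (by simp [hu0.symm, hv0.symm]),
        Set.ncard_insert_of_notMem (by simp [hune]), Set.ncard_singleton]
  have hle : 3 ≤ S.ncard := by
    rw [← hcard]
    exact Set.ncard_le_ncard hsub (Set.toFinite S)
  have hle2 := hAPN (F (u + v)) (u + v) hb0
  rw [← hS] at hle2
  omega
end
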